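/- For the discrete Morse function f constructed in the proof of the main theorem (building one vertex at each increase of B and one edge joining two existing components at each decrease of B), the induced homological sequence B^f equals the prescribed sequence B. -/

import Mathlib

/-- A (ℕ-valued) discrete Morse function on a graph `G`: weakly increasing, at most
2-to-1, and equal values occur only on an incident vertex–edge pair. -/
structure DMF {V : Type} [Fintype V] (G : SimpleGraph V) where
  fv : V → ℕ
  fe : G.edgeSet → ℕ
  mono : ∀ (v : V) (e : G.edgeSet), v ∈ (e : Sym2 V) → fv v ≤ fe e
  fv_inj : ∀ v w : V, fv v = fv w → v = w
  fe_inj : ∀ e e' : G.edgeSet, fe e = fe e' → e = e'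
  mixed : ∀ (v : V) (e : G.edgeSet), fv v = fe e → v ∈ (e : Sym2 V)

/-- The closed level subcomplex `G_a` (all simplices of value `≤ a`). -/
def DMF.subLE {V : Type} [Fintype V] {G : SimpleGraph V} (F : DMF G) (a : ℕ) :
    SimpleGraph {v : V // F.fv v ≤ a} where
  Adj u w := ∃ h : G.Adj u.1 w.1, F.fe ⟨s(u.1, w.1), h⟩ ≤ a
  symm := by
    constructor
    rintro u w ⟨h, hle⟩
    refine ⟨h.symm, ?_⟩
    have he : (⟨s(w.1, u.1), h.symm⟩ : G.edgeSet) = ⟨s(u.1, w.1), h⟩ :=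
      Subtype.ext (Sym2.eq_swap)
    rw [he]; exact hle
  loopless := by constructor; rintro u ⟨h, -⟩; exact G.loopless.irrefl u.1 h

/-- The open level subcomplex (all simplices of value `< a`), i.e. the level
subcomplex `G_{a-ε}` immediately preceding level `a`. -/
def DMF.subLT {V : Type} [Fintype V] {G : SimpleGraph V} (F : DMF G) (a : ℕ) :
    SimpleGraph {v : V // F.fv v < a} where
  Adj u w := ∃ h : G.Adj u.1 w.1, F.fe ⟨s(u.1, w.1), h⟩ < a
  symm := by
    constructor
    rintro u w ⟨h, hle⟩
    refine ⟨h.symm, ?_⟩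
    have he : (⟨s(w.1, u.1), h.symm⟩ : G.edgeSet) = ⟨s(u.1, w.1), h⟩ :=
      Subtype.ext (Sym2.eq_swap)
    rw [he]; exact hle
  loopless := by constructor; rintro u ⟨h, -⟩; exact G.loopless.irrefl u.1 h

/-- `b_0` of the level subcomplex at level `a`. -/
noncomputable def DMF.b0 {V : Type} [Fintype V] {G : SimpleGraph V} (F : DMF G) (a : ℕ) : ℕ :=
  Nat.card (F.subLE a).ConnectedComponent

/-- A simplex (vertex or edge) is critical if no other simplex shares its value. -/
def DMF.crit {V : Type} [Fintype V] {G : SimpleGraph V} (F : DMF G) :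
    V ⊕ G.edgeSet → Prop
  | .inl v => ∀ e : G.edgeSet, F.fv v ≠ F.fe e
  | .inr e => ∀ v : V, F.fv v ≠ F.fe e

/-- The value of a simplex. -/
def DMF.fval {V : Type} [Fintype V] {G : SimpleGraph V} (F : DMF G) :
    V ⊕ G.edgeSet → ℕ :=
  Sum.elim F.fv F.fe

/-- In the level subcomplex strictly below level `a`, the vertex `u` lies in the same
connected component as the simplex `σ`. -/
def DMF.reachBelow {V : Type} [Fintype V] {G : SimpleGraph V} (F : DMF G) (a : ℕ)
    (u : {v : V // F.fv v < a}) : V ⊕ G.edgeSet → Prop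
  | .inl x => ∃ hx : F.fv x < a, (F.subLT a).Reachable u ⟨x, hx⟩
  | .inr e => ∃ x, x ∈ (e : Sym2 V) ∧ ∃ hx : F.fv x < a, (F.subLT a).Reachable u ⟨x, hx⟩



open SimpleGraph

/-- Reachability in a graph that is another graph plus (at most) one extra edge. -/
lemma reach_add_edge_aux {W : Type} {G₁ G₂ : SimpleGraph W} {u w : W}
    (hAdj : ∀ x y, G₂.Adj x y → G₁.Adj x y ∨ s(x, y) = s(u, w)) :
    ∀ {x y : W}, G₂.Walk x y →
      G₁.Reachable x y ∨ (G₁.Reachable x u ∧ G₁.Reachable w y) ∨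
        (G₁.Reachable x w ∧ G₁.Reachable u y) := by
  intro x y p
  induction p with
  | nil => exact Or.inl (Reachable.refl _)
  | @cons x z y h q ih =>
    rcases hAdj _ _ h with h1 | h2
    · rcases ih with hr | ⟨h3, h4⟩ | ⟨h3, h4⟩
      · exact Or.inl (h1.reachable.trans hr)
      · exact Or.inr (Or.inl ⟨h1.reachable.trans h3, h4⟩)
      · exact Or.inr (Or.inr ⟨h1.reachable.trans h3, h4⟩)
    · rw [Sym2.eq_iff] at h2
      rcases h2 with ⟨rfl, rfl⟩ | ⟨rfl, rfl⟩
      · rcases ih with hr | ⟨h3, h4⟩ | ⟨h3, h4⟩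
        · exact Or.inr (Or.inl ⟨Reachable.refl _, hr⟩)
        · exact Or.inr (Or.inl ⟨Reachable.refl _, h4⟩)
        · exact Or.inl h4
      · rcases ih with hr | ⟨h3, h4⟩ | ⟨h3, h4⟩
        · exact Or.inr (Or.inr ⟨Reachable.refl _, hr⟩)
        · exact Or.inl h4
        · exact Or.inr (Or.inr ⟨Reachable.refl _, h4⟩)

/-- Adding one edge between two distinct connected components decreases the number of
components by one. -/
lemma card_add_edge {W : Type} [Fintype W] {G₁ G₂ : SimpleGraph W} {u w : W}
    (hle : G₁ ≤ G₂) (hAdj : ∀ x y, G₂.Adj x y → G₁.Adj x y ∨ s(x, y) = s(u, w))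
    (huw : G₂.Adj u w) (hnr : ¬ G₁.Reachable u w) :
    Nat.card G₂.ConnectedComponent + 1 = Nat.card G₁.ConnectedComponent := by
  classical
  set ψ : G₁.ConnectedComponent → G₂.ConnectedComponent :=
    SimpleGraph.ConnectedComponent.map (SimpleGraph.Hom.ofLE hle) with hψ
  have hψmk : ∀ x : W, ψ (G₁.connectedComponentMk x) = G₂.connectedComponentMk x :=
    fun x => rfl
  have claim : ∀ x y : W, G₂.Reachable x y →
      G₁.connectedComponentMk x = G₁.connectedComponentMk y ∨
      (G₁.connectedComponentMk x = G₁.connectedComponentMk u ∧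
        G₁.connectedComponentMk y = G₁.connectedComponentMk w) ∨
      (G₁.connectedComponentMk x = G₁.connectedComponentMk w ∧
        G₁.connectedComponentMk y = G₁.connectedComponentMk u) := by
    intro x y hr
    obtain ⟨p⟩ := hr
    rcases reach_add_edge_aux hAdj p with hr | ⟨h3, h4⟩ | ⟨h3, h4⟩
    · exact Or.inl (ConnectedComponent.sound hr)
    · exact Or.inr (Or.inl ⟨ConnectedComponent.sound h3,
        (ConnectedComponent.sound h4).symm⟩)
    · exact Or.inr (Or.inr ⟨ConnectedComponent.sound h3,
        (ConnectedComponent.sound h4).symm⟩)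
  set cw := G₁.connectedComponentMk w with hcw
  set cu := G₁.connectedComponentMk u with hcu
  have hcune : cu ≠ cw := fun h => hnr (ConnectedComponent.exact h)
  -- the bijection
  have hinj2 : ∀ c d : {c : G₁.ConnectedComponent // ¬ c = cw},
      ψ c.1 = ψ d.1 → c = d := by
    rintro ⟨c, hc⟩ ⟨d, hd⟩ h
    apply Subtype.ext
    simp only
    revert hc hd h
    refine SimpleGraph.ConnectedComponent.ind₂ ?_ c d
    intro x y hc hd h
    rcases claim x y (ConnectedComponent.exact h) with h1 | ⟨h1, h2⟩ | ⟨h1, h2⟩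
    · exact h1
    · exact absurd h2 hd
    · exact absurd h1 hc
  have hsurj2 : ∀ d : G₂.ConnectedComponent,
      ∃ c : {c : G₁.ConnectedComponent // ¬ c = cw}, ψ c.1 = d := by
    refine SimpleGraph.ConnectedComponent.ind ?_
    intro x
    by_cases hx : G₁.connectedComponentMk x = cw
    · refine ⟨⟨cu, hcune⟩, ?_⟩
      have hxw : G₁.Reachable x w := ConnectedComponent.exact hx
      have : G₂.Reachable u x :=
        (huw.reachable).trans (Reachable.mono hle hxw).symm
      exact ConnectedComponent.sound this
    · exact ⟨⟨_, hx⟩, hψmk x⟩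
  have e : {c : G₁.ConnectedComponent // ¬ c = cw} ≃ G₂.ConnectedComponent :=
    Equiv.ofBijective (fun c => ψ c.1)
      ⟨fun c d h => hinj2 c d h, fun d => hsurj2 d⟩
  have h1 : Nat.card G₂.ConnectedComponent =
      Nat.card {c : G₁.ConnectedComponent // ¬ c = cw} := Nat.card_congr e.symm
  have h2 : Nat.card G₁.ConnectedComponent =
      Nat.card {c : G₁.ConnectedComponent // c = cw} +
      Nat.card {c : G₁.ConnectedComponent // ¬ c = cw} := by
    rw [← Nat.card_sum]
    exact Nat.card_congr (Equiv.sumCompl (· = cw)).symm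
  have h3 : Nat.card {c : G₁.ConnectedComponent // c = cw} = 1 := by
    rw [Nat.card_eq_one_iff_unique]
    exact ⟨⟨fun a b => Subtype.ext (a.2.trans b.2.symm)⟩, ⟨⟨cw, rfl⟩⟩⟩
  rw [h1, h2, h3]
  omega

open SimpleGraph

/-- The ambient-level graph on all of `V`: edges of value `≤ a`. -/
def DMF.amb {V : Type} [Fintype V] {G : SimpleGraph V} (F : DMF G) (a : ℕ) :
    SimpleGraph V where
  Adj x y := ∃ h : G.Adj x y, F.fe ⟨s(x, y), h⟩ ≤ a
  symm := by
    constructor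
    rintro x y ⟨h, hle⟩
    refine ⟨h.symm, ?_⟩
    have he : (⟨s(y, x), h.symm⟩ : G.edgeSet) = ⟨s(x, y), h⟩ :=
      Subtype.ext (Sym2.eq_swap)
    rw [he]; exact hle
  loopless := by constructor; rintro x ⟨h, -⟩; exact G.loopless.irrefl x h

lemma DMF.amb_adj_le {V : Type} [Fintype V] {G : SimpleGraph V} (F : DMF G) {a : ℕ}
    {x y : V} (h : (F.amb a).Adj x y) : F.fv x ≤ a ∧ F.fv y ≤ a := by
  obtain ⟨hG, hle⟩ := h
  constructor
  · exact (F.mono x ⟨s(x, y), hG⟩ (Sym2.mem_mk_left x y)).trans hle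
  · exact (F.mono y ⟨s(x, y), hG⟩ (Sym2.mem_mk_right x y)).trans hle

lemma DMF.amb_walk_reach {V : Type} [Fintype V] {G : SimpleGraph V} (F : DMF G) {a : ℕ} :
    ∀ {x y : V}, (F.amb a).Walk x y → ∀ (hx : F.fv x ≤ a) (hy : F.fv y ≤ a),
      (F.subLE a).Reachable ⟨x, hx⟩ ⟨y, hy⟩ := by
  intro x y p
  induction p with
  | nil => intro hx hy; exact Reachable.refl _
  | @cons x z y h q ih =>
    intro hx hy
    have hz : F.fv z ≤ a := (F.amb_adj_le h).2
    have hadj : (F.subLE a).Adj ⟨x, hx⟩ ⟨z, hz⟩ := h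
    exact hadj.reachable.trans (ih hz hy)

/-- The hom from the sublevel complex into the ambient-level graph. -/
def DMF.leHom {V : Type} [Fintype V] {G : SimpleGraph V} (F : DMF G) (a : ℕ) :
    F.subLE a →g F.amb a where
  toFun := Subtype.val
  map_rel' := fun h => h

lemma DMF.amb_card {V : Type} [Fintype V] {G : SimpleGraph V} (F : DMF G) (a : ℕ) :
    Nat.card (F.amb a).ConnectedComponent
      = F.b0 a + Nat.card {v : V // ¬ F.fv v ≤ a} := by
  classical
  set f : V → (F.subLE a).ConnectedComponent ⊕ {v : V // ¬ F.fv v ≤ a} :=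
    fun v => if h : F.fv v ≤ a
      then Sum.inl ((F.subLE a).connectedComponentMk ⟨v, h⟩)
      else Sum.inr ⟨v, h⟩ with hf
  have hstep : ∀ {x y : V}, (F.amb a).Walk x y → f x = f y := by
    intro x y p
    induction p with
    | nil => rfl
    | @cons x z y h q ih =>
      refine Eq.trans ?_ ih
      have hx := (F.amb_adj_le h).1
      have hz := (F.amb_adj_le h).2
      have hadj : (F.subLE a).Adj ⟨x, hx⟩ ⟨z, hz⟩ := h
      rw [hf]
      simp only [dif_pos hx, dif_pos hz]
      exact congrArg Sum.inl (ConnectedComponent.connectedComponentMk_eq_of_adj hadj)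
  set Φ : (F.amb a).ConnectedComponent →
      (F.subLE a).ConnectedComponent ⊕ {v : V // ¬ F.fv v ≤ a} :=
    SimpleGraph.ConnectedComponent.lift f (fun v w p _ => hstep p) with hΦ
  have hΦmk : ∀ v : V, Φ ((F.amb a).connectedComponentMk v) = f v := fun v => rfl
  have hbij : Function.Bijective Φ := by
    constructor
    · intro c d
      refine SimpleGraph.ConnectedComponent.ind₂ ?_ c d
      intro x y h
      rw [hΦmk, hΦmk, hf] at h
      by_cases hx : F.fv x ≤ a <;> by_cases hy : F.fv y ≤ a
      · simp only [dif_pos hx, dif_pos hy] at h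
        have h2 := Sum.inl.inj h
        have hr : (F.subLE a).Reachable ⟨x, hx⟩ ⟨y, hy⟩ :=
          ConnectedComponent.exact h2
        exact ConnectedComponent.sound (hr.map (F.leHom a))
      · simp only [dif_pos hx, dif_neg hy] at h
        exact absurd h (by simp)
      · simp only [dif_neg hx, dif_pos hy] at h
        exact absurd h (by simp)

      · simp only [dif_neg hx, dif_neg hy] at h
        have h2 := Sum.inr.inj h
        have : x = y := congrArg Subtype.val h2
        rw [this]
    · rintro (c | ⟨v, hv⟩)
      · refine SimpleGraph.ConnectedComponent.ind ?_ c
        intro vv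
        refine ⟨(F.amb a).connectedComponentMk vv.1, ?_⟩
        rw [hΦmk, hf]
        simp only [dif_pos vv.2]
      · refine ⟨(F.amb a).connectedComponentMk v, ?_⟩
        rw [hΦmk, hf]
        simp only [dif_neg hv]
  rw [Nat.card_congr (Equiv.ofBijective Φ hbij), Nat.card_sum]
  rfl
/-- For the discrete Morse function constructed in the proof of the main theorem —
values `0,…,n-1` are assigned bijectively to the simplices, a vertex is created at step
`0` and at each step where `B` increases, and at each step where `B` decreases an edge
is created joining two distinct connected components of the preceding sublevel
complex — the induced homological sequence equals `B`: the sublevel complex at level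
`j` has exactly `B j` connected components. -/
theorem constructed_dmf_homological_sequence {V : Type} [Fintype V]
    (G : SimpleGraph V) (F : DMF G) (n : ℕ) (hn : 0 < n) (B : ℕ → ℕ)
    (hB0 : B 0 = 1)
    (hstep : ∀ j, 1 ≤ j → j < n → B j = B (j - 1) + 1 ∨ B (j - 1) = B j + 1)
    (hbound : ∀ σ : V ⊕ G.edgeSet, F.fval σ < n)
    (hinj : Function.Injective F.fval)
    (hsurj : ∀ m < n, ∃ σ : V ⊕ G.edgeSet, F.fval σ = m)
    (hvert0 : ∃ v : V, F.fv v = 0)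
    (hvert : ∀ j, 1 ≤ j → j < n → B (j - 1) < B j → ∃ v : V, F.fv v = j)
    (hedge : ∀ j, 1 ≤ j → j < n → B j < B (j - 1) →
      ∃ e : G.edgeSet, F.fe e = j ∧ ∃ u w : V, (e : Sym2 V) = s(u, w) ∧
        ∃ (hu : F.fv u < j) (hw : F.fv w < j),
          ¬ (F.subLT j).Reachable ⟨u, hu⟩ ⟨w, hw⟩) :
    ∀ j < n, F.b0 j = B j := by
  classical
  have hvfe : ∀ (v : V) (e : G.edgeSet), F.fv v ≠ F.fe e := by
    intro v e h
    have h2 : F.fval (Sum.inl v) = F.fval (Sum.inr e) := h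
    exact absurd (hinj h2) (by simp)
  intro j
  induction j with
  | zero =>
    intro _
    rw [hB0]
    obtain ⟨v0, hv0⟩ := hvert0
    have hsub : ∀ x y : {v : V // F.fv v ≤ 0}, x = y := by
      rintro ⟨x, hx⟩ ⟨y, hy⟩
      have : x = y := F.fv_inj x y (by omega)
      subst this; rfl
    show Nat.card (F.subLE 0).ConnectedComponent = 1
    rw [Nat.card_eq_one_iff_unique]
    constructor
    · constructor
      refine SimpleGraph.ConnectedComponent.ind₂ ?_
      intro v w
      rw [hsub v w]
    · exact ⟨(F.subLE 0).connectedComponentMk ⟨v0, le_of_eq hv0⟩⟩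
  | succ k ih =>
    intro hk1
    have hk : k < n := by omega
    have IH := ih hk
    have hAk := F.amb_card k
    have hAk1 := F.amb_card (k + 1)
    rcases hstep (k + 1) (by omega) hk1 with hinc | hdec
    · -- a vertex is added
      rw [Nat.add_sub_cancel] at hinc
      obtain ⟨v0, hv0⟩ := hvert (k + 1) (by omega) hk1 (by rw [Nat.add_sub_cancel]; omega)
      -- no edge has value k+1
      have hnoe : ∀ e : G.edgeSet, F.fe e ≠ k + 1 := by
        intro e hc
        exact hvfe v0 e (hv0.trans hc.symm)
      have hgraph : F.amb (k + 1) = F.amb k := by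
        ext x y
        constructor
        · rintro ⟨h, hle⟩
          refine ⟨h, ?_⟩
          have := hnoe ⟨s(x, y), h⟩
          omega
        · rintro ⟨h, hle⟩
          exact ⟨h, by omega⟩
      have hvcount : Nat.card {v : V // ¬ F.fv v ≤ k}
          = Nat.card {v : V // ¬ F.fv v ≤ k + 1} + 1 := by
        rw [Nat.card_eq_fintype_card, Nat.card_eq_fintype_card,
          Fintype.card_subtype, Fintype.card_subtype]
        have hins : Finset.univ.filter (fun v : V => ¬ F.fv v ≤ k)
            = insert v0 (Finset.univ.filter (fun v : V => ¬ F.fv v ≤ k + 1)) := by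
          ext v
          simp only [Finset.mem_filter, Finset.mem_insert, Finset.mem_univ, true_and]
          constructor
          · intro hv
            by_cases h : v = v0
            · exact Or.inl h
            · have : F.fv v ≠ k + 1 := fun hc => h (F.fv_inj v v0 (by omega))
              omega
          · rintro (rfl | h) <;> omega
        rw [hins, Finset.card_insert_of_notMem (by
          simp only [Finset.mem_filter, Finset.mem_univ, true_and, not_not]
          omega)]
      rw [hgraph] at hAk1
      show F.b0 (k + 1) = B (k + 1)
      omega
    · -- an edge is added
      rw [Nat.add_sub_cancel] at hdec
      obtain ⟨e, hfe, u, w, he, hu, hw, hnr⟩ :=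
        hedge (k + 1) (by omega) hk1 (by rw [Nat.add_sub_cancel]; omega)
      have hnov : ∀ v : V, F.fv v ≠ k + 1 := by
        intro v hc
        exact hvfe v e (by rw [hc, hfe])
      have hle : F.amb k ≤ F.amb (k + 1) := by
        rintro x y ⟨h, hle⟩
        exact ⟨h, by omega⟩
      have hAdj : ∀ x y, (F.amb (k + 1)).Adj x y →
          (F.amb k).Adj x y ∨ s(x, y) = s(u, w) := by
        rintro x y ⟨h, hle'⟩
        by_cases hcase : F.fe ⟨s(x, y), h⟩ ≤ k
        · exact Or.inl ⟨h, hcase⟩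
        · right
          have h1 : F.fe ⟨s(x, y), h⟩ = k + 1 := by omega
          have heq := F.fe_inj _ _ (h1.trans hfe.symm)
          have h2 : s(x, y) = (e : Sym2 V) := congrArg Subtype.val heq
          exact h2.trans he
      have hGadj : G.Adj u w := by
        have h2 := e.2
        rw [he] at h2
        exact h2
      have huw : (F.amb (k + 1)).Adj u w := by
        refine ⟨hGadj, ?_⟩
        have h3 : (⟨s(u, w), hGadj⟩ : G.edgeSet) = e := Subtype.ext he.symm
        rw [h3, hfe]
      have hnr' : ¬ (F.amb k).Reachable u w := by
        intro hr
        obtain ⟨p⟩ := hr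
        have hu' : F.fv u ≤ k := by omega
        have hw' : F.fv w ≤ k := by omega
        have hsub := F.amb_walk_reach p hu' hw'
        apply hnr
        exact hsub.map
          ((⟨fun v => ⟨v.1, Nat.lt_succ_of_le v.2⟩, by
              rintro a b ⟨h, hle2⟩
              exact ⟨h, Nat.lt_succ_of_le hle2⟩⟩ :
            F.subLE k →g F.subLT (k + 1)))
      have hcard := card_add_edge hle hAdj huw hnr'
      have hvcount : Nat.card {v : V // ¬ F.fv v ≤ k}
          = Nat.card {v : V // ¬ F.fv v ≤ k + 1} := by
        refine Nat.card_congr (Equiv.subtypeEquivRight ?_)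
        intro v
        have := hnov v
        omega
      show F.b0 (k + 1) = B (k + 1)
      omega
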